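/- Every element of K_0 is a linear combination of K_1 and elements of the derived subalgebra [K_0, K_0]; in particular K_{-1}, K_2, K_{-2} lie in the span of K_1 and commutators, and by induction so does every K_n. -/

import Mathlib

/-- Every element of `K₀` is a linear combination of `K 1` and elements of the derived
subalgebra `[K₀, K₀]`. -/
theorem stmt3 (V : Type) [LieRing V] [LieAlgebra ℂ V] (K : ℤ → V)
    (hK0 : K 0 = 0)
    (hbr : ∀ m n : ℤ, m ≠ -n →
      ⁅K m, K n⁆ = ((m : ℂ) - n) • K (m + n) - (m : ℂ) • K m + (n : ℂ) • K n)
    (hbr' : ∀ m : ℤ, ⁅K m, K (-m)⁆ = -((m : ℂ) • K m) - (m : ℂ) • K (-m))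
    (b : Module.Basis {n : ℤ // n ≠ 0} ℂ V) (hb : ∀ n : {n : ℤ // n ≠ 0}, b n = K n.1) :
    Submodule.span ℂ {K 1} ⊔ Submodule.span ℂ {x : V | ∃ a b : V, x = ⁅a, b⁆} = ⊤ := by
  set S : Submodule ℂ V :=
    Submodule.span ℂ {K 1} ⊔ Submodule.span ℂ {x : V | ∃ a b : V, x = ⁅a, b⁆} with hS
  have hcomm : ∀ x y : V, ⁅x, y⁆ ∈ S := fun x y =>
    le_sup_right (α := Submodule ℂ V) (Submodule.subset_span ⟨x, y, rfl⟩)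
  have h1 : K 1 ∈ S := le_sup_left (α := Submodule ℂ V) (Submodule.subset_span rfl)
  -- K (-1)
  have hm1 : K (-1) ∈ S := by
    have h := hbr' 1
    have he : K (-1) = -⁅K 1, K (-1)⁆ - K 1 := by
      rw [h]; push_cast; module
    rw [he]
    exact S.sub_mem (S.neg_mem (hcomm _ _)) h1
  -- K 2
  have h2 : K 2 ∈ S := by
    have h := hbr 2 (-1) (by norm_num)
    have he : K 2 = (2:ℂ)⁻¹ • ((3:ℂ) • K 1 - K (-1) - ⁅K 2, K (-1)⁆) := by
      rw [eq_inv_smul_iff₀ (by norm_num), h]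
      norm_num
      module
    rw [he]
    exact S.smul_mem _ (S.sub_mem (S.sub_mem (S.smul_mem _ h1) hm1) (hcomm _ _))
  -- K (-2)
  have hm2 : K (-2) ∈ S := by
    have h := hbr (-2) 1 (by norm_num)
    have he : K (-2) = (2:ℂ)⁻¹ • (⁅K (-2), K 1⁆ + (3:ℂ) • K (-1) - K 1) := by
      rw [eq_inv_smul_iff₀ (by norm_num), h]
      norm_num
      module
    rw [he]
    exact S.smul_mem _ (S.sub_mem (S.add_mem (hcomm _ _) (S.smul_mem _ hm1)) h1)
  -- induction steps
  have key : ∀ n : ℤ, 2 ≤ n → K n ∈ S → K (n+1) ∈ S := by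
    intro n hn hKn
    have hc : ((n:ℂ) - 1) ≠ 0 := by
      rw [sub_ne_zero]
      exact_mod_cast (by omega : n ≠ 1)
    have h := hbr n 1 (by omega)
    have he : K (n+1) = ((n:ℂ) - 1)⁻¹ • (⁅K n, K 1⁆ + (n:ℂ) • K n - K 1) := by
      rw [eq_inv_smul_iff₀ hc, h]
      push_cast
      module
    rw [he]
    exact S.smul_mem _ (S.sub_mem (S.add_mem (hcomm _ _) (S.smul_mem _ hKn)) h1)
  have key' : ∀ n : ℤ, 2 ≤ n → K (-n) ∈ S → K (-(n+1)) ∈ S := by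
    intro n hn hKn
    have hc : ((n:ℂ) - 1) ≠ 0 := by
      rw [sub_ne_zero]
      exact_mod_cast (by omega : n ≠ 1)
    have h := hbr (-n) (-1) (by omega)
    have he : K (-(n+1)) = ((n:ℂ) - 1)⁻¹ • ((n:ℂ) • K (-n) - K (-1) - ⁅K (-n), K (-1)⁆) := by
      rw [eq_inv_smul_iff₀ hc, h]
      push_cast
      have : -n + -1 = -(n+1) := by ring
      rw [this]
      module
    rw [he]
    exact S.smul_mem _ (S.sub_mem (S.sub_mem (S.smul_mem _ hKn) hm1) (hcomm _ _))
  have main : ∀ m : ℕ, K ((m:ℤ)+1) ∈ S ∧ K (-((m:ℤ)+1)) ∈ S := by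
    intro m
    induction m with
    | zero => exact ⟨by norm_num [h1], by norm_num [hm1]⟩
    | succ m ih =>
      rcases Nat.eq_zero_or_pos m with hm | hm
      · subst hm
        constructor
        · simpa using h2
        · simpa using hm2
      · have h2m : (2:ℤ) ≤ (m:ℤ) + 1 := by omega
        constructor
        · have := key ((m:ℤ)+1) h2m ih.1
          convert this using 2 <;>
            push_cast <;> ring
        · have := key' ((m:ℤ)+1) h2m ih.2
          convert this using 2 <;>
            push_cast <;> ring
  rw [eq_top_iff, ← b.span_eq, Submodule.span_le]
  rintro x ⟨i, rfl⟩
  rw [hb]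
  rcases i.2.lt_or_gt with h | h
  · obtain ⟨m, hm⟩ : ∃ m : ℕ, i.1 = -((m:ℤ)+1) := ⟨(-i.1-1).toNat, by omega⟩
    rw [hm]; exact (main m).2
  · obtain ⟨m, hm⟩ : ∃ m : ℕ, i.1 = (m:ℤ)+1 := ⟨(i.1-1).toNat, by omega⟩
    rw [hm]; exact (main m).1
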